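/- Let P be a finite poset and let A_1, …, A_k be distinct nonempty antichains of P such that conv(χ_∅, χ_{A_1}, …, χ_{A_k}) is a simplex face of the chain polytope C(P) containing the origin. Then each A_i is a singleton {p_i}, and the elements p_1, …, p_k form a chain in P. -/

import Mathlib

open Set

variable {E : Type*} [AddCommGroup E] [Module ℝ E]

/-- A polytope: the convex hull of a finite set of points. -/
def IsPolytope (P : Set E) : Prop := ∃ S : Finset E, P = convexHull ℝ (S : Set E)

open Classical in
/-- Dimension of a polytope: `-1` for the empty set, else the dimension of its affine span. -/
noncomputable def polyDim (P : Set E) : ℤ :=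
  if P = ∅ then -1 else (Module.finrank ℝ (vectorSpan ℝ P) : ℤ)

/-- Number of vertices (extreme points). -/
noncomputable def vertexCount (P : Set E) : ℕ := (P.extremePoints ℝ).ncard

/-- A simplex: a polytope with `dim + 1` vertices (the empty set counts as a simplex). -/
def IsSimplex (P : Set E) : Prop :=
  IsPolytope P ∧ (vertexCount P : ℤ) = polyDim P + 1

/-- Faces of a polytope are its extreme subsets. -/
def IsFaceOf (F P : Set E) : Prop := IsExtreme ℝ P F

/-- Number of `k`-dimensional simplex faces of `P`. -/
noncomputable def simpCount (P : Set E) (k : ℤ) : ℕ :=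
  {F : Set E | IsFaceOf F P ∧ IsSimplex F ∧ polyDim F = k}.ncard

/-- Number of `k`-dimensional simplex faces of `P` containing the origin. -/
noncomputable def simpCount0 (P : Set E) (k : ℤ) : ℕ :=
  {F : Set E | IsFaceOf F P ∧ IsSimplex F ∧ polyDim F = k ∧ (0 : E) ∈ F}.ncard

/-- Number of `k`-dimensional simplex faces of `P` not containing the origin. -/
noncomputable def simpCount1 (P : Set E) (k : ℤ) : ℕ :=
  {F : Set E | IsFaceOf F P ∧ IsSimplex F ∧ polyDim F = k ∧ (0 : E) ∉ F}.ncard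

/-- The order polytope of a poset. -/
def orderPolytope (α : Type*) [PartialOrder α] : Set (α → ℝ) :=
  {x | (∀ p, 0 ≤ x p ∧ x p ≤ 1) ∧ ∀ p q : α, p ≤ q → x p ≤ x q}

/-- The chain polytope of a poset. -/
def chainPolytope (α : Type*) [PartialOrder α] : Set (α → ℝ) :=
  {x | (∀ p, 0 ≤ x p) ∧ ∀ s : Finset α, IsChain (· ≤ ·) (s : Set α) → ∑ p ∈ s, x p ≤ 1}

open Classical in
/-- Characteristic vector of a subset. -/
noncomputable def chi {α : Type*} (S : Set α) : α → ℝ := fun p => if p ∈ S then 1 else 0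


section Helpers

lemma chi01 {α : Type*} (S : Set α) (p : α) : chi S p = 0 ∨ chi S p = 1 := by
  by_cases h : p ∈ S <;> simp [chi, h]

lemma chi_injective {α : Type*} : Function.Injective (chi (α := α)) := by
  intro S T h
  ext p
  have h' := congrFun h p
  constructor <;> intro hp <;> by_contra hq <;> simp [chi, hp, hq] at h'

lemma zero_mem_chainPolytope {α : Type*} [PartialOrder α] : (0 : α → ℝ) ∈ chainPolytope α :=
  ⟨fun _ => le_refl 0, fun s _ => by simp⟩

lemma mem_chainPolytope_le_one {α : Type*} [PartialOrder α] {x : α → ℝ}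
    (hx : x ∈ chainPolytope α) (p : α) : x p ≤ 1 := by
  have h := hx.2 {p} (by rw [Finset.coe_singleton]; exact Set.subsingleton_singleton.pairwise _)
  simpa using h

lemma chi_mem_chainPolytope {α : Type*} [PartialOrder α] {S : Set α}
    (hS : IsAntichain (· ≤ ·) S) : chi S ∈ chainPolytope α := by
  constructor
  · intro p; rcases chi01 S p with h | h <;> rw [h] <;> norm_num
  · intro s hs
    classical
    by_cases h : ∃ a ∈ s, a ∈ S
    · obtain ⟨a, has, haS⟩ := h
      rw [← Finset.add_sum_erase _ _ has]
      have h1 : chi S a = 1 := by simp [chi, haS]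
      have h0 : ∑ p ∈ s.erase a, chi S p = 0 := by
        apply Finset.sum_eq_zero
        intro p hp
        have hpa : p ≠ a := Finset.ne_of_mem_erase hp
        have hps : p ∈ s := Finset.mem_of_mem_erase hp
        have hpS : p ∉ S := by
          intro hpS
          rcases hs (Finset.mem_coe.mpr hps) (Finset.mem_coe.mpr has) hpa with h' | h'
          · exact hS hpS haS hpa h'
          · exact hS haS hpS (Ne.symm hpa) h'
        simp [chi, hpS]
      rw [h1, h0]; norm_num
    · push_neg at h
      have h0 : ∑ p ∈ s, chi S p = 0 :=
        Finset.sum_eq_zero fun p hp => by simp [chi, h p hp]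
      rw [h0]; norm_num

lemma convex_chainPolytope (α : Type*) [PartialOrder α] : Convex ℝ (chainPolytope α) := by
  intro x hx y hy a b ha hb hab
  constructor
  · intro p
    have h1 := hx.1 p; have h2 := hy.1 p
    have h : (a • x + b • y) p = a * x p + b * y p := by simp [smul_eq_mul]
    rw [h]; positivity
  · intro s hs
    have hxs := hx.2 s hs; have hys := hy.2 s hs
    have h : ∑ p ∈ s, (a • x + b • y) p = a * ∑ p ∈ s, x p + b * ∑ p ∈ s, y p := by
      simp [smul_eq_mul, Finset.sum_add_distrib, Finset.mul_sum]
    rw [h]; nlinarith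

lemma zeroOne_extreme {α : Type*} [PartialOrder α] {F : Set (α → ℝ)}
    (hF : F ⊆ chainPolytope α) {x : α → ℝ} (hx : x ∈ F)
    (h01 : ∀ p, x p = 0 ∨ x p = 1) : x ∈ F.extremePoints ℝ := by
  refine ⟨hx, fun y hy z hz hseg => ?_⟩
  obtain ⟨a, b, ha, hb, hab, habx⟩ := hseg
  have hy' := hF hy; have hz' := hF hz
  have key : ∀ p, y p = x p ∧ z p = x p := by
    intro p
    have h1 : a * y p + b * z p = x p := by
      have := congrFun habx p; simpa [smul_eq_mul] using this
    have hy0 := hy'.1 p; have hz0 := hz'.1 p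
    have hy1 := mem_chainPolytope_le_one hy' p
    have hz1 := mem_chainPolytope_le_one hz' p
    rcases h01 p with h | h <;> rw [h] at h1 <;> rw [h] <;>
      constructor <;> nlinarith
  exact funext fun p => (key p).1

end Helpers

/-- origin-containing simplex faces of the chain polytope come from chains
of singleton antichains. -/
theorem chain_simplex_face_structure (α : Type*) [Fintype α] [PartialOrder α] (k : ℕ)
    (A : Fin k → Set α) (hA : ∀ i, IsAntichain (· ≤ ·) (A i)) (hne : ∀ i, (A i).Nonempty)
    (hinj : Function.Injective A)
    (hface : IsFaceOf (convexHull ℝ (insert (0 : α → ℝ) (Set.range fun i => chi (A i))))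
      (chainPolytope α))
    (hsimp : IsSimplex (convexHull ℝ (insert (0 : α → ℝ) (Set.range fun i => chi (A i))))) :
    ∃ p : Fin k → α, (∀ i, A i = {p i}) ∧ IsChain (· ≤ ·) (Set.range p) := by
  classical
  set b : Fin k → (α → ℝ) := fun i => chi (A i) with hbdef
  set S : Set (α → ℝ) := insert 0 (Set.range b) with hSdef
  set F : Set (α → ℝ) := convexHull ℝ S with hFdef
  have hFsub : F ⊆ chainPolytope α := hface.1
  have hSsub : S ⊆ F := subset_convexHull ℝ S
  have h0F : (0 : α → ℝ) ∈ F := hSsub (Set.mem_insert _ _)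
  have hbS : ∀ i, b i ∈ S := fun i => Set.mem_insert_of_mem _ ⟨i, rfl⟩
  have hbF : ∀ i, b i ∈ F := fun i => hSsub (hbS i)
  have hconv : Convex ℝ F := convex_convexHull ℝ S
  -- vertices of F are exactly S
  have hext : F.extremePoints ℝ = S := by
    apply Set.Subset.antisymm
    · exact extremePoints_convexHull_subset
    · rintro x (rfl | ⟨i, rfl⟩)
      · exact zeroOne_extreme hFsub h0F (fun p => Or.inl rfl)
      · exact zeroOne_extreme hFsub (hbF i) (chi01 _)
  have key : ∀ x ∈ F, (∀ p, x p = 0 ∨ x p = 1) → x ∈ S := by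
    intro x hx h01
    rw [← hext]
    exact zeroOne_extreme hFsub hx h01
  -- extreme-step for midpoints
  have midstep : ∀ u v : α → ℝ, u ∈ chainPolytope α → v ∈ chainPolytope α →
      (1/2 : ℝ) • u + (1/2 : ℝ) • v ∈ F → u ∈ F ∧ v ∈ F := by
    intro u v hu hv hm
    exact ⟨hface.2 hu hv hm ⟨1/2, 1/2, by norm_num, by norm_num, by norm_num, rfl⟩,
      hface.2 hv hu hm ⟨1/2, 1/2, by norm_num, by norm_num, by norm_num, add_comm _ _⟩⟩
  -- chi (A i) is nonzero
  have hbne0 : ∀ i, b i ≠ 0 := by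
    intro i h
    obtain ⟨a, ha⟩ := hne i
    have := congrFun h a
    simp [hbdef, chi, ha] at this
  -- counting: vertexCount F = k + 1
  have h0nr : (0 : α → ℝ) ∉ Set.range b := by rintro ⟨i, hi⟩; exact hbne0 i hi
  have hbinj : Function.Injective b := fun i j h => hinj (chi_injective h)
  have hcard : vertexCount F = k + 1 := by
    unfold vertexCount
    rw [hext, hSdef, Set.ncard_insert_of_notMem h0nr (Set.finite_range b)]
    congr 1
    rw [← Set.image_univ, Set.ncard_image_of_injective _ hbinj, Set.ncard_univ]
    simp
  -- dimension
  have hFne : F ≠ ∅ := Set.Nonempty.ne_empty ⟨0, h0F⟩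
  have hdim : polyDim F = (Module.finrank ℝ (vectorSpan ℝ F) : ℤ) := by
    unfold polyDim; rw [if_neg hFne]
  have hfr : Module.finrank ℝ (vectorSpan ℝ F) = k := by
    have hc := hsimp.2
    rw [hcard, hdim] at hc
    omega
  -- vectorSpan F = span (range b)
  have hvs : vectorSpan ℝ F = Submodule.span ℝ (Set.range b) := by
    have h1 : vectorSpan ℝ F = vectorSpan ℝ S := by
      rw [hFdef, ← direction_affineSpan, affineSpan_convexHull, direction_affineSpan]
    have hmem : ∀ z ∈ S, z ∈ Submodule.span ℝ (Set.range b) := by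
      rintro z (rfl | hz)
      · exact Submodule.zero_mem _
      · exact Submodule.subset_span hz
    rw [h1]
    apply le_antisymm
    · rw [vectorSpan_def]
      apply Submodule.span_le.mpr
      rintro _ ⟨x, hx, y, hy, rfl⟩
      exact Submodule.sub_mem _ (hmem x hx) (hmem y hy)
    · apply Submodule.span_le.mpr
      rintro _ ⟨i, rfl⟩
      have h := vsub_mem_vectorSpan ℝ (hbS i) (Set.mem_insert 0 (Set.range b))
      simpa using h
  have li : LinearIndependent ℝ b := by
    apply linearIndependent_iff_card_eq_finrank_span.mpr
    rw [Fintype.card_fin]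
    unfold Set.finrank
    rw [← hvs, hfr]
  -- each A i is a singleton
  have hsingle : ∀ i, ∃ q : α, A i = {q} := by
    intro i
    obtain ⟨a, ha⟩ := hne i
    by_contra hcon
    have hc : ∃ c ∈ A i, c ≠ a := by
      by_contra h; push_neg at h
      exact hcon ⟨a, Set.eq_singleton_iff_unique_mem.mpr ⟨ha, h⟩⟩
    obtain ⟨c, hcA, hca⟩ := hc
    set u : α → ℝ := chi ({a} : Set α) with hu
    set v : α → ℝ := chi (A i \ {a}) with hv
    have hu_anti : IsAntichain (· ≤ ·) ({a} : Set α) :=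
      (hA i).subset (Set.singleton_subset_iff.mpr ha)
    have hv_anti : IsAntichain (· ≤ ·) (A i \ {a}) := (hA i).subset Set.diff_subset
    have hmid : (1/2 : ℝ) • u + (1/2 : ℝ) • v = (1/2 : ℝ) • b i := by
      funext p
      by_cases hpa : p = a
      · subst hpa
        simp [hu, hv, hbdef, chi, ha]
      · by_cases hpA : p ∈ A i <;>
          simp [hu, hv, hbdef, chi, hpa, hpA]
    have hmidF : (1/2 : ℝ) • u + (1/2 : ℝ) • v ∈ F := by
      rw [hmid]
      have h := hconv h0F (hbF i) (by norm_num : (0:ℝ) ≤ 1/2)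
        (by norm_num : (0:ℝ) ≤ 1/2) (by norm_num)
      simpa using h
    obtain ⟨huF, hvF⟩ := midstep u v (chi_mem_chainPolytope hu_anti)
      (chi_mem_chainPolytope hv_anti) hmidF
    have huS := key u huF (chi01 _)
    have hvS := key v hvF (chi01 _)
    have hu0 : u ≠ 0 := by
      intro h; have := congrFun h a; simp [hu, chi] at this
    have hv0 : v ≠ 0 := by
      intro h; have := congrFun h c
      simp [hv, chi, hcA, hca] at this
    obtain ⟨j, hj⟩ : u ∈ Set.range b := by
      rcases huS with h | h
      · exact absurd h hu0
      · exact h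
    obtain ⟨m, hm⟩ : v ∈ Set.range b := by
      rcases hvS with h | h
      · exact absurd h hv0
      · exact h
    have hAj : A j = ({a} : Set α) := chi_injective hj
    have hAm : A m = A i \ {a} := chi_injective hm
    have hij : i ≠ j := by
      intro h; rw [← h] at hAj
      rw [hAj] at hcA
      exact hca hcA
    have him : i ≠ m := by
      intro h; rw [← h] at hAm
      have := hAm ▸ ha
      exact this.2 rfl
    have hjm : j ≠ m := by
      intro h; rw [← h] at hAm
      rw [hAj] at hAm
      have : a ∈ A i \ ({a} : Set α) := hAm ▸ rfl
      exact this.2 rfl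
    have hrel : b i = b j + b m := by
      funext p
      by_cases hpa : p = a
      · subst hpa
        simp [hbdef, chi, ha, hAj, hAm]
      · by_cases hpA : p ∈ A i <;>
          simp [hbdef, chi, hAj, hAm, hpa, hpA]
    have hnot := li.notMem_span_image (s := ({j, m} : Set (Fin k))) (x := i)
      (by simp [hij, him])
    apply hnot
    rw [hrel]
    exact Submodule.add_mem _
      (Submodule.subset_span ⟨j, by simp, rfl⟩)
      (Submodule.subset_span ⟨m, by simp, rfl⟩)
  choose p hp using hsingle
  refine ⟨p, hp, ?_⟩
  rintro _ ⟨i, rfl⟩ _ ⟨j, rfl⟩ hpij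
  by_contra hcomp
  push_neg at hcomp
  have hanti : IsAntichain (· ≤ ·) ({p i, p j} : Set α) := by
    intro x hx y hy hxy
    simp only [Set.mem_insert_iff, Set.mem_singleton_iff] at hx hy
    rcases hx with rfl | rfl <;> rcases hy with rfl | rfl
    · exact absurd rfl hxy
    · exact hcomp.1
    · exact hcomp.2
    · exact absurd rfl hxy
  set u : α → ℝ := chi ({p i, p j} : Set α) with hu
  have hu0 : u ≠ 0 := by
    intro h; have := congrFun h (p i); simp [hu, chi] at this
  have hmidF : (1/2 : ℝ) • u + (1/2 : ℝ) • (0 : α → ℝ) ∈ F := by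
    have h := hconv (hbF i) (hbF j) (by norm_num : (0:ℝ) ≤ 1/2)
      (by norm_num : (0:ℝ) ≤ 1/2) (by norm_num)
    have heq : (1/2 : ℝ) • u + (1/2 : ℝ) • (0 : α → ℝ) = (1/2 : ℝ) • b i + (1/2 : ℝ) • b j := by
      funext q
      by_cases h1 : q = p i
      · subst h1
        simp [hu, hbdef, chi, hp, hpij]
      · by_cases h2 : q = p j <;>
          simp [hu, hbdef, chi, hp, h1, h2, Ne.symm hpij]
    rw [heq]; exact h
  have huF : u ∈ F :=
    (midstep u 0 (chi_mem_chainPolytope hanti) zero_mem_chainPolytope hmidF).1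
  have huS := key u huF (chi01 _)
  rcases huS with h | ⟨m, hm⟩
  · exact hu0 h
  · have hm' : A m = ({p i, p j} : Set α) := chi_injective hm
    rw [hp m] at hm'
    have h1 : p i ∈ ({p m} : Set α) := hm' ▸ Set.mem_insert _ _
    have h2 : p j ∈ ({p m} : Set α) := hm' ▸ Set.mem_insert_of_mem _ rfl
    exact hpij (h1.trans h2.symm)
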